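/- Let i ≥ 2 be an integer and δ > 0 a real number. Then the image of the interval [0, δ] under the map t ↦ t^i − t δ^{i−1} is exactly the interval [(i^{−i/(i−1)} − i^{−1/(i−1)}) δ^i, 0]. -/

import Mathlib

open Set

lemma aux_pow (i : ℕ) (hi : 1 ≤ i) (s t : ℝ) (hs : 0 < s) (ht : 0 ≤ t) :
    s ^ i + (i : ℝ) * s ^ (i - 1) * (t - s) ≤ t ^ i := by
  have hx : (-2 : ℝ) ≤ t / s - 1 := by
    have : 0 ≤ t / s := div_nonneg ht hs.le
    linarith
  have hb := one_add_mul_le_pow hx i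
  have h1 : (1 : ℝ) + (t / s - 1) = t / s := by ring
  rw [h1, div_pow] at hb
  have hsi : (0:ℝ) < s ^ i := pow_pos hs i
  have hb' : s ^ i * (1 + (i:ℝ) * (t/s - 1)) ≤ t ^ i := by
    calc s ^ i * (1 + (i:ℝ) * (t/s - 1)) ≤ s ^ i * (t^i / s^i) :=
          mul_le_mul_of_nonneg_left hb hsi.le
      _ = t ^ i := by field_simp
  have hsplit : s ^ i = s ^ (i-1) * s := by
    rw [← pow_succ]; congr 1; omega
  have heq : s ^ i * (1 + (i:ℝ) * (t/s - 1)) = s ^ i + (i:ℝ) * s^(i-1) * (t - s) := by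
    rw [hsplit]; field_simp
  linarith [heq ▸ hb']

theorem stmt5 (i : ℕ) (hi : 2 ≤ i) (δ : ℝ) (hδ : 0 < δ) :
    (fun t : ℝ => t ^ i - t * δ ^ (i - 1)) '' Set.Icc 0 δ =
      Set.Icc
        (((i : ℝ) ^ (-(i : ℝ) / ((i : ℝ) - 1)) - (i : ℝ) ^ (-(1 : ℝ) / ((i : ℝ) - 1)))
          * δ ^ i)
        0 := by
  have hi1 : 1 ≤ i := by omega
  have hiR : (0:ℝ) < (i:ℝ) - 1 := by
    have : (2:ℝ) ≤ (i:ℝ) := by exact_mod_cast hi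
    linarith
  have hiP : (0:ℝ) < (i:ℝ) := by linarith
  set c : ℝ := (i : ℝ) ^ (-(1 : ℝ) / ((i : ℝ) - 1)) with hc_def
  have hc : 0 < c := Real.rpow_pos_of_pos hiP _
  have hc1 : c ≤ 1 := by
    apply Real.rpow_le_one_of_one_le_of_nonpos
    · linarith
    · have : (0:ℝ) < (i:ℝ) - 1 := hiR
      apply div_nonpos_of_nonpos_of_nonneg <;> linarith
  have hcastsub : ((i - 1 : ℕ) : ℝ) = (i:ℝ) - 1 := by
    push_cast [Nat.cast_sub hi1]; ring
  have hcpow : c ^ (i - 1) = (i:ℝ)⁻¹ := by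
    rw [hc_def, ← Real.rpow_natCast ((i:ℝ) ^ (-(1:ℝ)/((i:ℝ)-1))) (i-1),
      ← Real.rpow_mul hiP.le, hcastsub]
    rw [div_mul_cancel₀ _ hiR.ne', Real.rpow_neg_one]
  have hcipow : c ^ i = (i:ℝ) ^ (-(i:ℝ) / ((i:ℝ)-1)) := by
    rw [hc_def, ← Real.rpow_natCast ((i:ℝ) ^ (-(1:ℝ)/((i:ℝ)-1))) i,
      ← Real.rpow_mul hiP.le]
    congr 1
    field_simp
  set t₀ : ℝ := δ * c with ht₀_def
  have ht₀ : 0 < t₀ := mul_pos hδ hc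
  have ht₀le : t₀ ≤ δ := by
    calc t₀ = δ * c := rfl
      _ ≤ δ * 1 := mul_le_mul_of_nonneg_left hc1 hδ.le
      _ = δ := mul_one δ
  have hδsplit : δ ^ i = δ ^ (i-1) * δ := by
    rw [← pow_succ]; congr 1; omega
  have key : (i:ℝ) * t₀ ^ (i-1) = δ ^ (i-1) := by
    rw [ht₀_def, mul_pow, hcpow]
    field_simp
  have ft₀ : t₀ ^ i - t₀ * δ ^ (i-1) =
      ((i : ℝ) ^ (-(i : ℝ) / ((i : ℝ) - 1)) - c) * δ ^ i := by
    rw [ht₀_def, mul_pow, hcipow, hδsplit]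
    ring
  apply Subset.antisymm
  · rintro _ ⟨t, ht, rfl⟩
    simp only [mem_Icc] at ht ⊢
    constructor
    · have h1 := aux_pow i hi1 t₀ t ht₀ ht.1
      rw [mul_assoc, ← mul_assoc, key] at h1
      nlinarith [ft₀]
    · have h2 : t ^ i ≤ t * δ ^ (i-1) := by
        have hsplit : t ^ i = t * t ^ (i-1) := by
          rw [← pow_succ']; congr 1; omega
        rw [hsplit]
        exact mul_le_mul_of_nonneg_left (pow_le_pow_left₀ ht.1 ht.2 _) ht.1
      linarith
  · have hcont : ContinuousOn (fun t : ℝ => t ^ i - t * δ ^ (i - 1)) (Icc 0 t₀) := by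
      fun_prop
    have hiv := intermediate_value_Icc' ht₀.le hcont
    have hf0 : (0:ℝ) ^ i - 0 * δ ^ (i - 1) = 0 := by
      simp [zero_pow (by omega : i ≠ 0)]
    rw [hf0, ft₀] at hiv
    exact hiv.trans (image_mono (Icc_subset_Icc le_rfl ht₀le))
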